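/- arXiv:2103.00388 — 3 statements merged into one kernel-verified Lean document; each statement's English description precedes it below -/
import Mathlib

section
/- Let D be a skew-symmetric n×n real matrix, Φ an n×r real matrix, H : ℝⁿ → ℝ differentiable, and set D_r = Φᵀ D Φ. If a : ℝ → ℝ^r is differentiable and satisfies the structure-preserving reduced order model ȧ(t) = D_r ∇ₐH(Φ a(t)), where ∇ₐH(Φa) is the gradient of a ↦ H(Φa), then the reduced Hamiltonian H_r(t) := H(Φ a(t)) is constant in t. -/
open Matrix

/-- For the structure-preserving reduced order model `ȧ(t) = D_r ∇ₐH(Φ a(t))` with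
`D_r = Φᵀ D Φ` and `D` skew-symmetric, the reduced Hamiltonian `H(Φ a(t))` is constant. -/
theorem sp_pod_hamiltonian_conserved
    {n r : ℕ} (D : Matrix (Fin n) (Fin n) ℝ) (hD : Dᵀ = -D)
    (Φ : Matrix (Fin n) (Fin r) ℝ)
    (H : EuclideanSpace ℝ (Fin n) → ℝ) (hH : Differentiable ℝ H)
    (a : ℝ → EuclideanSpace ℝ (Fin r)) (ha : Differentiable ℝ a)
    (hode : ∀ t : ℝ, deriv a t =
      (Φᵀ * D * Φ).mulVec
        (gradient (fun b : EuclideanSpace ℝ (Fin r) =>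
          H (WithLp.toLp 2 (Φ.mulVec b) : EuclideanSpace ℝ (Fin n))) (a t) : EuclideanSpace ℝ (Fin r))) :
    ∀ t : ℝ, H (WithLp.toLp 2 (Φ.mulVec (a t)) : EuclideanSpace ℝ (Fin n)) =
      H (WithLp.toLp 2 (Φ.mulVec (a 0)) : EuclideanSpace ℝ (Fin n)) := by
  set G : EuclideanSpace ℝ (Fin r) → ℝ :=
    fun b => H (WithLp.toLp 2 (Φ.mulVec b) : EuclideanSpace ℝ (Fin n)) with hGdef
  set M : Matrix (Fin r) (Fin r) ℝ := Φᵀ * D * Φ with hM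
  -- the linear map b ↦ Φ.mulVec b as a continuous linear map between Euclidean spaces
  let L : EuclideanSpace ℝ (Fin r) →L[ℝ] EuclideanSpace ℝ (Fin n) :=
    LinearMap.toContinuousLinearMap
      { toFun := fun b => (WithLp.toLp 2 (Φ.mulVec b) : EuclideanSpace ℝ (Fin n)),
        map_add' := fun x y => by simp [Matrix.mulVec_add],
        map_smul' := fun c x => by simp [Matrix.mulVec_smul] }
  have hGdiff : Differentiable ℝ G := fun x =>
    (hH _).comp x (L.differentiable x)
  -- f(t) = G(a t)
  have hf : Differentiable ℝ (fun t => G (a t)) := hGdiff.comp ha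
  have hMskew : Mᵀ = -M := by
    rw [hM]
    simp only [Matrix.transpose_mul, Matrix.transpose_transpose, hD]
    rw [Matrix.neg_mul, Matrix.mul_neg, Matrix.mul_assoc]
  have key : ∀ t, deriv (fun t => G (a t)) t = 0 := by
    intro t
    set g : EuclideanSpace ℝ (Fin r) := gradient G (a t) with hg
    have hga : HasGradientAt G g (a t) := (hGdiff (a t)).hasGradientAt
    have hda : HasDerivAt a (WithLp.toLp 2 (M.mulVec g)) t := by
      have := (ha t).hasDerivAt
      rwa [show deriv a t = WithLp.toLp 2 (M.mulVec g) from congrArg (WithLp.toLp 2) (hode t)] at this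
    have hcomp : HasDerivAt (fun t => G (a t))
        (inner ℝ g (WithLp.toLp 2 (M.mulVec g) : EuclideanSpace ℝ (Fin r)) : ℝ) t := by
      have hfd : HasFDerivAt G (InnerProductSpace.toDual ℝ _ g) (a t) :=
        hasGradientAt_iff_hasFDerivAt.mp hga
      have := hfd.comp_hasDerivAt t hda
      simp at this; exact this
    have hinner : (inner ℝ g (WithLp.toLp 2 (M.mulVec g) : EuclideanSpace ℝ (Fin r)) : ℝ) = 0 := by
      have h1 : (inner ℝ g (WithLp.toLp 2 (M.mulVec g) : EuclideanSpace ℝ (Fin r)) : ℝ)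
          = g ⬝ᵥ M.mulVec g := by
        rw [PiLp.inner_apply]
        simp [dotProduct, mul_comm]
      have h2 : g ⬝ᵥ M.mulVec g = -(g ⬝ᵥ M.mulVec g) := by
        conv_lhs => rw [Matrix.dotProduct_mulVec, ← Matrix.mulVec_transpose, hMskew]
        rw [Matrix.neg_mulVec, neg_dotProduct, dotProduct_comm]
      have : g ⬝ᵥ M.mulVec g = 0 := by linarith
      rw [h1, this]
    rw [hcomp.deriv, hinner]
  intro t
  exact is_const_of_deriv_eq_zero hf key t 0
end

section
/- Let D ∈ ℝ^{n×n} be skew-symmetric, Φ ∈ ℝ^{n×r}, Q ∈ ℝ^{n×n} symmetric, c ∈ ℝⁿ, 𝒫 ∈ ℝ^{n×n}, and let G : ℝⁿ → ℝⁿ be differentiable. Set D_r = Φᵀ D Φ, Q_r = Φᵀ Q Φ, and H_r(a) = ½ aᵀ Q_r a + cᵀ 𝒫 G(Φ a). If a : ℝ → ℝ^r is differentiable and satisfies the structure-preserving DEIM reduced model ȧ(t) = D_r ∇ₐH_r(a(t)) = D_r [Q_r a(t) + Φᵀ J_G(Φ a(t))ᵀ 𝒫ᵀ c], then H_r(a(t))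 is constant in t. -/
open Matrix

private lemma dot_transpose_mulVec {m k : ℕ} (A : Matrix (Fin m) (Fin k) ℝ)
    (x : Fin m → ℝ) (y : Fin k → ℝ) :
    (Aᵀ.mulVec x) ⬝ᵥ y = x ⬝ᵥ (A.mulVec y) := by
  rw [Matrix.mulVec_transpose, ← Matrix.dotProduct_mulVec]

/-- Structure-preserving DEIM model: with `D` skew-symmetric, `D_r = Φᵀ D Φ`,
`Q_r = Φᵀ Q Φ`, and the DEIM reduced Hamiltonian `H_r(a) = ½ aᵀ Q_r a + cᵀ 𝒫 G(Φ a)`,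
any differentiable solution of
`ȧ(t) = D_r ∇ₐH_r(a(t)) = D_r [Q_r a(t) + Φᵀ J_G(Φ a(t))ᵀ 𝒫ᵀ c]`
keeps `H_r(a(t))` constant in time. -/
theorem sp_deim_hamiltonian_conserved
    {n r : ℕ} (D : Matrix (Fin n) (Fin n) ℝ) (hD : Dᵀ = -D)
    (Φ : Matrix (Fin n) (Fin r) ℝ)
    (Q : Matrix (Fin n) (Fin n) ℝ) (hQ : Qᵀ = Q)
    (c : Fin n → ℝ) (Pdeim : Matrix (Fin n) (Fin n) ℝ)
    (G : EuclideanSpace ℝ (Fin n) → EuclideanSpace ℝ (Fin n))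
    (J : EuclideanSpace ℝ (Fin n) → Matrix (Fin n) (Fin n) ℝ)
    (hJ : ∀ x : EuclideanSpace ℝ (Fin n),
      HasFDerivAt G (LinearMap.toContinuousLinearMap (Matrix.toEuclideanLin (J x))) x)
    (Hr : EuclideanSpace ℝ (Fin r) → ℝ)
    (hHr : Hr = fun b : EuclideanSpace ℝ (Fin r) =>
      (1 / 2 : ℝ) * (b ⬝ᵥ (Φᵀ * Q * Φ).mulVec b) +
        c ⬝ᵥ Pdeim.mulVec (G (WithLp.toLp 2 (Φ.mulVec b) : EuclideanSpace ℝ (Fin n))))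
    (a : ℝ → EuclideanSpace ℝ (Fin r)) (ha : Differentiable ℝ a)
    (hode : ∀ t : ℝ, deriv a t =
      (Φᵀ * D * Φ).mulVec
        ((Φᵀ * Q * Φ).mulVec (a t) +
          Φᵀ.mulVec ((J (WithLp.toLp 2 (Φ.mulVec (a t)) : EuclideanSpace ℝ (Fin n)))ᵀ.mulVec
            (Pdeimᵀ.mulVec c)))) :
    ∀ t : ℝ, Hr (a t) = Hr (a 0) := by
  set M : Matrix (Fin r) (Fin r) ℝ := Φᵀ * Q * Φ with hMdef
  set Dr : Matrix (Fin r) (Fin r) ℝ := Φᵀ * D * Φ with hDrdef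
  have hM : Mᵀ = M := by
    simp [hMdef, Matrix.transpose_mul, hQ, Matrix.mul_assoc]
  have hDr : Drᵀ = -Dr := by
    simp [hDrdef, Matrix.transpose_mul, hD, Matrix.mul_assoc, Matrix.mul_neg,
      Matrix.neg_mul]
  have key : ∀ s : ℝ, HasDerivAt (fun τ => Hr (a τ)) 0 s := by
    intro s
    have haa : HasDerivAt a (deriv a s) s := (ha s).hasDerivAt
    set ad : EuclideanSpace ℝ (Fin r) := deriv a s with had
    set b : EuclideanSpace ℝ (Fin r) := a s with hb
    -- derivative of τ ↦ Φ (a τ)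
    set LΦ : EuclideanSpace ℝ (Fin r) →L[ℝ] EuclideanSpace ℝ (Fin n) :=
      LinearMap.toContinuousLinearMap (Matrix.toEuclideanLin Φ) with hLΦ
    have hΦlin : HasDerivAt (fun τ => LΦ (a τ)) (LΦ ad) s :=
      LΦ.hasFDerivAt.comp_hasDerivAt s haa
    -- derivative of τ ↦ G (Φ (a τ))
    have hGd : HasDerivAt (fun τ => G (LΦ (a τ)))
        ((LinearMap.toContinuousLinearMap (Matrix.toEuclideanLin (J (LΦ b)))) (LΦ ad)) s :=
      (hJ (LΦ b)).comp_hasDerivAt s hΦlin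
    -- linear functional y ↦ c ⬝ᵥ Pdeim.mulVec y
    set ℓ : EuclideanSpace ℝ (Fin n) →L[ℝ] ℝ :=
      LinearMap.toContinuousLinearMap
        { toFun := fun y : EuclideanSpace ℝ (Fin n) => c ⬝ᵥ Pdeim.mulVec y
          map_add' := by
            intro x y
            show c ⬝ᵥ Pdeim.mulVec ((x : Fin n → ℝ) + (y : Fin n → ℝ)) =
              c ⬝ᵥ Pdeim.mulVec (x : Fin n → ℝ) + c ⬝ᵥ Pdeim.mulVec (y : Fin n → ℝ)
            rw [Matrix.mulVec_add, dotProduct_add]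
          map_smul' := by
            intro t x
            show c ⬝ᵥ Pdeim.mulVec (t • (x : Fin n → ℝ)) =
              (RingHom.id ℝ) t • (c ⬝ᵥ Pdeim.mulVec (x : Fin n → ℝ))
            simp only [dotProduct, Matrix.mulVec, Pi.smul_apply, PiLp.smul_apply, smul_eq_mul,
              RingHom.id_apply, Finset.mul_sum]
            exact Finset.sum_congr rfl fun i _ => Finset.sum_congr rfl fun j _ => by
              ring } with hℓ
    have h2 :
        HasDerivAt (fun τ => c ⬝ᵥ Pdeim.mulVec (G (WithLp.toLp 2 (Φ.mulVec (a τ)) : EuclideanSpace ℝ (Fin n))))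
          (c ⬝ᵥ Pdeim.mulVec ((J (WithLp.toLp 2 (Φ.mulVec b) : EuclideanSpace ℝ (Fin n))).mulVec
            (Φ.mulVec ad))) s := by
      exact ℓ.hasFDerivAt.comp_hasDerivAt s hGd
    -- component derivatives
    have hcomp : ∀ i : Fin r, HasDerivAt (fun τ => a τ i) (ad i) s := by
      intro i
      exact (EuclideanSpace.proj i (𝕜 := ℝ)).hasFDerivAt.comp_hasDerivAt s haa
    -- quadratic part as a double sum
    have h1 :
        HasDerivAt (fun τ => ∑ i, ∑ j, a τ i * (M i j * a τ j))
          (∑ i, ∑ j, (ad i * (M i j * b j) + b i * (M i j * ad j))) s := by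
      apply HasDerivAt.fun_sum
      intro i _
      apply HasDerivAt.fun_sum
      intro j _
      exact (hcomp i).mul ((hcomp j).const_mul (M i j))
    have hfun : (fun τ => Hr (a τ)) =
        fun τ => (1 / 2 : ℝ) * (∑ i, ∑ j, a τ i * (M i j * a τ j)) +
          c ⬝ᵥ Pdeim.mulVec (G (WithLp.toLp 2 (Φ.mulVec (a τ)) : EuclideanSpace ℝ (Fin n))) := by
      funext τ
      rw [hHr]
      simp only [dotProduct, Matrix.mulVec, Finset.mul_sum]
    have hderiv :
        HasDerivAt (fun τ => Hr (a τ))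
          ((1 / 2 : ℝ) * (∑ i, ∑ j, (ad i * (M i j * b j) + b i * (M i j * ad j))) +
            c ⬝ᵥ Pdeim.mulVec ((J (WithLp.toLp 2 (Φ.mulVec b) : EuclideanSpace ℝ (Fin n))).mulVec
              (Φ.mulVec ad))) s := by
      rw [hfun]
      exact (h1.const_mul _).add h2
    -- now show the derivative value is 0
    set JΦ := J (WithLp.toLp 2 (Φ.mulVec b) : EuclideanSpace ℝ (Fin n)) with hJΦ
    set u : Fin r → ℝ := Φᵀ.mulVec (JΦᵀ.mulVec (Pdeimᵀ.mulVec c)) with hu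
    have hadval : (ad : Fin r → ℝ) = Dr.mulVec (M.mulVec b + u) := by
      rw [had, hode s]
    have hsum : (∑ i, ∑ j, (ad i * (M i j * b j) + b i * (M i j * ad j)))
        = 2 * ((M.mulVec b) ⬝ᵥ ad) := by
      have e1 : (∑ i, ∑ j, ad i * (M i j * b j)) = (M.mulVec b) ⬝ᵥ ad := by
        simp only [dotProduct, Matrix.mulVec, Finset.sum_mul]
        exact Finset.sum_congr rfl fun i _ => Finset.sum_congr rfl fun j _ => by ring
      have e2 : (∑ i, ∑ j, b i * (M i j * ad j)) = (M.mulVec b) ⬝ᵥ ad := by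
        calc (∑ i, ∑ j, b i * (M i j * ad j))
            = ∑ j, ∑ i, b i * (M i j * ad j) := Finset.sum_comm
          _ = (Mᵀ.mulVec b) ⬝ᵥ ad := by
              simp only [dotProduct, Matrix.mulVec, Matrix.transpose_apply,
                Finset.sum_mul]
              exact Finset.sum_congr rfl fun j _ => Finset.sum_congr rfl fun i _ => by ring
          _ = (M.mulVec b) ⬝ᵥ ad := by rw [hM]
      calc (∑ i, ∑ j, (ad i * (M i j * b j) + b i * (M i j * ad j)))
          = (∑ i, ∑ j, ad i * (M i j * b j)) + (∑ i, ∑ j, b i * (M i j * ad j)) := by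
            rw [← Finset.sum_add_distrib]
            congr 1; funext i; rw [← Finset.sum_add_distrib]
        _ = 2 * ((M.mulVec b) ⬝ᵥ ad) := by rw [e1, e2]; ring
    have hcterm : c ⬝ᵥ Pdeim.mulVec (JΦ.mulVec (Φ.mulVec ad)) = u ⬝ᵥ ad := by
      rw [hu, dot_transpose_mulVec, dot_transpose_mulVec, dot_transpose_mulVec]
    have hskew : ∀ w : Fin r → ℝ, w ⬝ᵥ Dr.mulVec w = 0 := by
      intro w
      have h1 : w ⬝ᵥ Dr.mulVec w = (Drᵀ.mulVec w) ⬝ᵥ w := by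
        rw [dot_transpose_mulVec]
      have h2 : (Drᵀ.mulVec w) ⬝ᵥ w = -((Dr.mulVec w) ⬝ᵥ w) := by
        rw [hDr]; simp [Matrix.neg_mulVec]
      have h3 : (Dr.mulVec w) ⬝ᵥ w = w ⬝ᵥ Dr.mulVec w := dotProduct_comm _ _
      rw [h3] at h2; rw [h2] at h1; linarith
    have hzero :
        (1 / 2 : ℝ) * (∑ i, ∑ j, (ad i * (M i j * b j) + b i * (M i j * ad j))) +
          c ⬝ᵥ Pdeim.mulVec (JΦ.mulVec (Φ.mulVec ad)) = 0 := by
      rw [hsum, hcterm]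
      have : (M.mulVec b) ⬝ᵥ ad + u ⬝ᵥ ad = (M.mulVec b + u) ⬝ᵥ ad := by
        rw [add_dotProduct]
      calc (1 / 2 : ℝ) * (2 * ((M.mulVec b) ⬝ᵥ ad)) + u ⬝ᵥ ad
          = (M.mulVec b + u) ⬝ᵥ ad := by rw [← this]; ring
        _ = (M.mulVec b + u) ⬝ᵥ Dr.mulVec (M.mulVec b + u) := by rw [hadval]
        _ = 0 := hskew _
    rw [← hzero]
    exact hderiv
  intro t
  exact is_const_of_deriv_eq_zero (fun s => (key s).differentiableAt)
    (fun s => (key s).deriv) t 0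
end

section
/- Let D ∈ ℝ^{n×n} be skew-symmetric, Φ ∈ ℝ^{n×r}, Q ∈ ℝ^{n×n} symmetric, c ∈ ℝⁿ, u₀ ∈ ℝⁿ, 𝒫 ∈ ℝ^{n×n}, and G : ℝⁿ → ℝⁿ differentiable. Define the shifted reduced Hamiltonian H_r(a) = ½ (Φa + u₀)ᵀ Q (Φa + u₀) + cᵀ [𝒫 G(Φa + u₀) + (I − 𝒫) G(u₀)], and set D_r = Φᵀ D Φ. If a : ℝ → ℝ^r is differentiable, satisfies ȧ(t) = D_r ∇ₐH_r(a(t)), and a(0) = 0, then H_r(a(t)) = H(u₀) for all t, where H(u) = ½ uᵀ Q u + cᵀ G(u) is the full-order discrete Hamiltonian. -/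
open Matrix

section AuxSPDEIM

variable {r n : ℕ}

lemma aux_dot_diff {E : Type*} [NormedAddCommGroup E] [NormedSpace ℝ E]
    {f g : E → Fin n → ℝ} (hf : Differentiable ℝ f) (hg : Differentiable ℝ g) :
    Differentiable ℝ (fun b => f b ⬝ᵥ g b) := by
  simp only [dotProduct]
  exact Differentiable.fun_sum fun i _ =>
    ((differentiable_pi.1 hf i).mul (differentiable_pi.1 hg i))

lemma aux_mulVec_diff {m : ℕ} {E : Type*} [NormedAddCommGroup E] [NormedSpace ℝ E]
    (M : Matrix (Fin n) (Fin m) ℝ) {f : E → Fin m → ℝ} (hf : Differentiable ℝ f) :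
    Differentiable ℝ (fun b => M.mulVec (f b)) := by
  refine differentiable_pi.2 fun i => ?_
  simp only [Matrix.mulVec, dotProduct]
  exact Differentiable.fun_sum fun j _ =>
    (differentiable_const (M i j)).mul (differentiable_pi.1 hf j)

lemma aux_G_coord {E : Type*} [NormedAddCommGroup E] [NormedSpace ℝ E]
    {u : E → Fin n → ℝ} (hu : Differentiable ℝ u)
    {G : EuclideanSpace ℝ (Fin n) → EuclideanSpace ℝ (Fin n)} (hG : Differentiable ℝ G) :
    Differentiable ℝ (fun b =>
      (WithLp.equiv 2 (Fin n → ℝ)) (G ((WithLp.equiv 2 (Fin n → ℝ)).symm (u b)))) := by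
  have h1 : Differentiable ℝ (fun b => ((WithLp.equiv 2 (Fin n → ℝ)).symm (u b))) :=
    ((PiLp.continuousLinearEquiv 2 ℝ (fun _ : Fin n => ℝ)).symm.differentiable).comp hu
  exact ((PiLp.continuousLinearEquiv 2 ℝ (fun _ : Fin n => ℝ)).differentiable).comp (hG.comp h1)

lemma aux_skew_zero (M : Matrix (Fin r) (Fin r) ℝ) (hM : Mᵀ = -M) (v : Fin r → ℝ) :
    v ⬝ᵥ M.mulVec v = 0 := by
  have h1 : v ⬝ᵥ M.mulVec v = -(v ⬝ᵥ M.mulVec v) := by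
    conv_lhs => rw [show v ⬝ᵥ M.mulVec v = Mᵀ.mulVec v ⬝ᵥ v by
      rw [Matrix.mulVec_transpose, ← Matrix.dotProduct_mulVec]]
    rw [hM, Matrix.neg_mulVec, neg_dotProduct, dotProduct_comm]
  linarith

end AuxSPDEIM

/-- Shifted-snapshot SP-DEIM model: with `D` skew-symmetric, `D_r = Φᵀ D Φ`, and the
shifted reduced Hamiltonian
`H_r(a) = ½ (Φa + u₀)ᵀ Q (Φa + u₀) + cᵀ [𝒫 G(Φa+u₀) + (I − 𝒫) G(u₀)]`,
any differentiable solution of `ȧ(t) = D_r ∇ₐH_r(a(t))` with `a(0) = 0` satisfies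
`H_r(a(t)) = H(u₀)` for all `t`, where `H(u) = ½ uᵀ Q u + cᵀ G(u)`. -/
theorem sp_deim_shifted_hamiltonian_equals_initial
    {n r : ℕ} (D : Matrix (Fin n) (Fin n) ℝ) (hD : Dᵀ = -D)
    (Φ : Matrix (Fin n) (Fin r) ℝ)
    (Q : Matrix (Fin n) (Fin n) ℝ) (hQ : Qᵀ = Q)
    (c : Fin n → ℝ) (u₀ : EuclideanSpace ℝ (Fin n))
    (Pdeim : Matrix (Fin n) (Fin n) ℝ)
    (G : EuclideanSpace ℝ (Fin n) → EuclideanSpace ℝ (Fin n))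
    (hG : Differentiable ℝ G)
    (Hr : EuclideanSpace ℝ (Fin r) → ℝ)
    (hHr : Hr = fun b : EuclideanSpace ℝ (Fin r) =>
      (1 / 2 : ℝ) * ((Φ.mulVec b + (fun i => u₀ i : Fin n → ℝ)) ⬝ᵥ Q.mulVec (Φ.mulVec b + (fun i => u₀ i : Fin n → ℝ))) +
        c ⬝ᵥ (Pdeim.mulVec (G (WithLp.toLp 2 (Φ.mulVec b + (fun i => u₀ i : Fin n → ℝ)) : EuclideanSpace ℝ (Fin n))) +
          ((1 : Matrix (Fin n) (Fin n) ℝ) - Pdeim).mulVec (G u₀)))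
    (a : ℝ → EuclideanSpace ℝ (Fin r)) (ha : Differentiable ℝ a)
    (hode : ∀ t : ℝ, deriv a t =
      (Φᵀ * D * Φ).mulVec (gradient Hr (a t) : EuclideanSpace ℝ (Fin r)))
    (ha0 : a 0 = 0) :
    ∀ t : ℝ, Hr (a t) =
      (1 / 2 : ℝ) * (u₀ ⬝ᵥ Q.mulVec u₀) + c ⬝ᵥ (G u₀ : Fin n → ℝ) := by
  -- differentiability of the pieces
  have hid : Differentiable ℝ
      (fun b : EuclideanSpace ℝ (Fin r) => (WithLp.equiv 2 (Fin r → ℝ)) b) :=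
    (PiLp.continuousLinearEquiv 2 ℝ (fun _ : Fin r => ℝ)).differentiable
  have huf : Differentiable ℝ
      (fun b : EuclideanSpace ℝ (Fin r) => Φ.mulVec b + (fun i => u₀ i : Fin n → ℝ)) := by
    exact (aux_mulVec_diff Φ hid).add (differentiable_const _)
  have hHrdiff : Differentiable ℝ Hr := by
    rw [hHr]
    refine Differentiable.add ?_ ?_
    · exact (differentiable_const _).mul (aux_dot_diff huf (aux_mulVec_diff Q huf))
    · exact aux_dot_diff (differentiable_const c)
        ((aux_mulVec_diff Pdeim (aux_G_coord huf hG)).add (differentiable_const _))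

  -- skew symmetry of reduced matrix
  have hskew : (Φᵀ * D * Φ)ᵀ = -(Φᵀ * D * Φ) := by
    simp [Matrix.transpose_mul, hD, Matrix.mul_neg, Matrix.neg_mul, Matrix.mul_assoc]
  -- derivative of t ↦ Hr (a t) vanishes
  have hderiv0 : ∀ t : ℝ, deriv (fun t => Hr (a t)) t = 0 := by
    intro t
    set g := gradient Hr (a t) with hg
    have hgrad : HasFDerivAt Hr ((InnerProductSpace.toDual ℝ (EuclideanSpace ℝ (Fin r))) g) (a t) :=
      hasGradientAt_iff_hasFDerivAt.1 (hHrdiff (a t)).hasGradientAt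
    have hcomp : HasDerivAt (fun t => Hr (a t))
        (((InnerProductSpace.toDual ℝ (EuclideanSpace ℝ (Fin r))) g) (deriv a t)) t :=
      hgrad.comp_hasDerivAt t (ha t).hasDerivAt
    rw [hcomp.deriv]
    have hinner : ∀ x y : EuclideanSpace ℝ (Fin r),
        ((InnerProductSpace.toDual ℝ (EuclideanSpace ℝ (Fin r))) x) y = (x : Fin r → ℝ) ⬝ᵥ y := by
      intro x y
      simp [InnerProductSpace.toDual_apply_apply, PiLp.inner_apply, RCLike.inner_apply, dotProduct, mul_comm]
    rw [hinner, hode t]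
    exact aux_skew_zero _ hskew g
  -- constancy
  have hconst := is_const_of_deriv_eq_zero (hHrdiff.comp ha) hderiv0
  intro t
  have h0 : Hr (a t) = Hr (a 0) := hconst t 0
  rw [h0, ha0, hHr]
  simp only [WithLp.ofLp_zero, Matrix.mulVec_zero, zero_add, Matrix.sub_mulVec, Matrix.one_mulVec]
  have hu0 : (fun i => u₀ i : Fin n → ℝ) = (u₀ : Fin n → ℝ) := rfl
  rw [hu0, WithLp.toLp_ofLp]
  ring_nf
end
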